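/- For the n-distance d(x₁,…,xₙ) = max_{i}(x₍ᵢ₊₁₎ − x₍ᵢ₎) on ℝ (largest inner interval), for all x₁,…,xₙ,z ∈ ℝ we have d(x₁,…,xₙ) ≤ (2/n)·∑_{i=1}^n d(x₁,…,xₙ)ᵢᶻ, and the constant 2/n is optimal: equality holds when x₁ < x₂ = ⋯ = xₙ and z = (x₁+x₂)/2. -/

import Mathlib

open Finset Function

/-- `d` is an `n`-distance: nonnegative, vanishing exactly on constant tuples,
symmetric, and satisfying the simplex inequality. -/
structure IsNDistance {X : Type*} {n : ℕ} (d : (Fin n → X) → ℝ) : Prop where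
  nonneg : ∀ x, 0 ≤ d x
  eq_zero_iff : ∀ x, d x = 0 ↔ ∀ i j : Fin n, x i = x j
  symm : ∀ (x : Fin n → X) (σ : Equiv.Perm (Fin n)), d (x ∘ σ) = d x
  simplex : ∀ (x : Fin n → X) (z : X), d x ≤ ∑ i, d (Function.update x i z)

/-- The largest gap between consecutive order statistics. -/
noncomputable def largestGap {n : ℕ} (x : Fin (n + 2) → ℝ) : ℝ :=
  ⨆ i : Fin (n + 1), (x (Tuple.sort x i.succ) - x (Tuple.sort x i.castSucc))

private lemma gap_le_largestGap {n : ℕ} (x : Fin (n + 2) → ℝ) (k : Fin (n + 1)) :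
    x (Tuple.sort x k.succ) - x (Tuple.sort x k.castSucc) ≤ largestGap x := by
  exact le_ciSup (f := fun i : Fin (n + 1) =>
    x (Tuple.sort x i.succ) - x (Tuple.sort x i.castSucc))
    (Set.Finite.bddAbove (Set.finite_range _)) k

private lemma largestGap_nonneg {n : ℕ} (x : Fin (n + 2) → ℝ) : 0 ≤ largestGap x := by
  have hmono : Monotone (x ∘ Tuple.sort x) := Tuple.monotone_sort x
  have h := gap_le_largestGap x 0
  have h2 : x (Tuple.sort x (0 : Fin (n + 1)).castSucc) ≤ x (Tuple.sort x (0 : Fin (n + 1)).succ) :=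
    hmono (Fin.castSucc_lt_succ).le
  linarith

private lemma lb {n : ℕ} {x : Fin (n + 2) → ℝ} {u v : ℝ}
    (hlo : ∃ i, x i ≤ u) (hhi : ∃ j, v ≤ x j)
    (hsplit : ∀ i, x i ≤ u ∨ v ≤ x i) : v - u ≤ largestGap x := by
  rcases le_or_gt v u with h | huv
  · have := largestGap_nonneg x; linarith
  · have hmono : Monotone (x ∘ Tuple.sort x) := Tuple.monotone_sort x
    set σ := Tuple.sort x with hσ
    obtain ⟨i, hi⟩ := hlo
    obtain ⟨j, hj⟩ := hhi
    set S : Finset (Fin (n + 2)) := univ.filter fun k => x (σ k) ≤ u with hS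
    have hSne : S.Nonempty := ⟨σ.symm i, by simp [hS, Equiv.apply_symm_apply, hi]⟩
    set k0 := S.max' hSne with hk0def
    have hk0 : x (σ k0) ≤ u := by
      have := S.max'_mem hSne
      simp only [hS, mem_filter] at this
      exact this.2
    have hjk : k0 < σ.symm j := by
      rcases lt_or_ge k0 (σ.symm j) with h | h
      · exact h
      · exfalso
        have h2 : (x ∘ σ) (σ.symm j) ≤ (x ∘ σ) k0 := hmono h
        simp only [comp_apply, Equiv.apply_symm_apply] at h2
        linarith
    have hk0lt : (k0 : ℕ) < n + 1 := by
      have h1 : (k0 : ℕ) < ((σ.symm j : Fin (n + 2)) : ℕ) := hjk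
      have h2 : ((σ.symm j : Fin (n + 2)) : ℕ) < n + 2 := (σ.symm j).isLt
      omega
    set κ : Fin (n + 1) := ⟨(k0 : ℕ), hk0lt⟩ with hκ
    have hcast : κ.castSucc = k0 := by
      apply Fin.ext; simp [hκ]
    have hnext : v ≤ x (σ κ.succ) := by
      rcases hsplit (σ κ.succ) with h | h
      · exfalso
        have hmem : κ.succ ∈ S := by simp [hS, h]
        have hle : κ.succ ≤ k0 := S.le_max' _ hmem
        have : (κ.succ : ℕ) = (k0 : ℕ) + 1 := by simp [hκ]
        have := Fin.le_def.mp hle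
        omega
      · exact h
    have hgap := gap_le_largestGap x κ
    rw [← hσ, hcast] at hgap
    linarith

private lemma attain {n : ℕ} (x : Fin (n + 2) → ℝ) :
    ∃ u v : ℝ, largestGap x = v - u ∧ (∃ i, x i = u) ∧ (∃ j, x j = v) ∧
      ∀ i, x i ≤ u ∨ v ≤ x i := by
  have hmono : Monotone (x ∘ Tuple.sort x) := Tuple.monotone_sort x
  obtain ⟨k, hk⟩ := Finite.exists_max fun k : Fin (n + 1) =>
    x (Tuple.sort x k.succ) - x (Tuple.sort x k.castSucc)
  refine ⟨x (Tuple.sort x k.castSucc), x (Tuple.sort x k.succ), ?_, ⟨_, rfl⟩, ⟨_, rfl⟩, ?_⟩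
  · exact le_antisymm (ciSup_le fun i => hk i) (gap_le_largestGap x k)
  · intro i
    set σ := Tuple.sort x with hσ
    have hrepr : i = σ (σ.symm i) := (Equiv.apply_symm_apply σ i).symm
    rcases le_or_gt ((σ.symm i : Fin (n + 2)) : ℕ) ((k.castSucc : Fin (n + 2)) : ℕ) with h | h
    · left
      rw [hrepr]
      exact hmono (Fin.le_def.mpr h)
    · right
      rw [hrepr]
      refine hmono (Fin.le_def.mpr ?_)
      have h1 : (k.succ : ℕ) = (k.castSucc : ℕ) + 1 := by simp
      omega

private lemma largestGap_le_of {n : ℕ} (x : Fin (n + 2) → ℝ) (c : ℝ)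
    (h : ∀ u v : ℝ, (∃ i, x i = u) → (∃ j, x j = v) → (∀ i, x i ≤ u ∨ v ≤ x i) → v - u ≤ c) :
    largestGap x ≤ c := by
  obtain ⟨u, v, hG, hu, hv, hs⟩ := attain x
  rw [hG]; exact h u v hu hv hs

/-- The best constant of the largest-inner-interval $n$-distance is $2/n$, attained when
$x_1 < x_2 = ⋯ = x_n$ and $z = (x_1+x_2)/2$. -/
theorem largestGap_best_constant (n : ℕ) :
    (∀ (x : Fin (n + 2) → ℝ) (z : ℝ),
      largestGap x ≤ (2 / ((n : ℝ) + 2)) * ∑ i, largestGap (Function.update x i z)) ∧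
    (∀ a b : ℝ, a < b →
      largestGap (fun i : Fin (n + 2) => if i = 0 then a else b) =
        (2 / ((n : ℝ) + 2)) *
          ∑ i, largestGap
            (Function.update (fun i : Fin (n + 2) => if i = 0 then a else b) i ((a + b) / 2))) := by
  have hn2 : (0 : ℝ) < (n : ℝ) + 2 := by positivity
  constructor
  · intro x z
    obtain ⟨u, v, hG, ⟨i0, hi0⟩, ⟨j0, hj0⟩, hsplit⟩ := attain x
    set S := ∑ i, largestGap (Function.update x i z) with hSdef
    have hSnn : 0 ≤ S := Finset.sum_nonneg fun i _ => largestGap_nonneg _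
    rcases le_or_gt (v - u) 0 with h0 | hpos
    · have : 0 ≤ 2 / ((n : ℝ) + 2) * S := by positivity
      linarith [hG ▸ h0]
    · have huv : u < v := by linarith
      have hij : i0 ≠ j0 := fun h => by rw [h, hj0] at hi0; linarith
      set w := max u (min z v) with hw
      have hwu : u ≤ w := le_max_left _ _
      have hwv : w ≤ v := max_le huv.le (min_le_right _ _)
      have key1 : ∀ i, i ≠ j0 → v - w ≤ largestGap (Function.update x i z) := by
        intro i hi
        rcases le_or_gt z v with hzv | hzv
        · have hzw : z ≤ w := le_max_of_le_right (le_min le_rfl hzv)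
          refine lb ⟨i, ?_⟩ ⟨j0, ?_⟩ ?_
          · rw [Function.update_self]; exact hzw
          · rw [Function.update_of_ne (Ne.symm hi)]; exact hj0.ge
          · intro m
            rcases eq_or_ne m i with rfl | hm
            · left; rw [Function.update_self]; exact hzw
            · rw [Function.update_of_ne hm]
              rcases hsplit m with h | h
              · left; linarith
              · right; exact h
        · have hwveq : w = v := by
            rw [hw, min_eq_right hzv.le, max_eq_right huv.le]
          rw [hwveq]
          simpa using largestGap_nonneg (Function.update x i z)
      have key2 : ∀ i, i ≠ i0 → w - u ≤ largestGap (Function.update x i z) := by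
        intro i hi
        rcases le_or_gt u z with huz | huz
        · have hwz : w ≤ z := max_le huz (min_le_left _ _)
          refine lb ⟨i0, ?_⟩ ⟨i, ?_⟩ ?_
          · rw [Function.update_of_ne (Ne.symm hi)]; exact hi0.le
          · rw [Function.update_self]; exact hwz
          · intro m
            rcases eq_or_ne m i with rfl | hm
            · right; rw [Function.update_self]; exact hwz
            · rw [Function.update_of_ne hm]
              rcases hsplit m with h | h
              · left; exact h
              · right; linarith
        · have hwueq : w = u := by
            rw [hw, max_eq_left (le_trans (min_le_left _ _) huz.le)]
          rw [hwueq]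
          simpa using largestGap_nonneg (Function.update x i z)
      have hmax : ∀ i ∈ (univ.erase j0).erase i0,
          (v - u) / 2 ≤ largestGap (Function.update x i z) := by
        intro i hi
        obtain ⟨hi1, hi2⟩ := Finset.mem_erase.mp hi
        have hi3 := (Finset.mem_erase.mp hi2).1
        rcases le_total w ((u + v) / 2) with h | h
        · have := key1 i hi3; linarith
        · have := key2 i hi1; linarith
      have hmemi0 : i0 ∈ univ.erase j0 := Finset.mem_erase.mpr ⟨hij, Finset.mem_univ i0⟩
      have hsumsplit : S = largestGap (Function.update x j0 z) +
          (largestGap (Function.update x i0 z) +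
            ∑ i ∈ (univ.erase j0).erase i0, largestGap (Function.update x i z)) := by
        rw [hSdef, ← Finset.add_sum_erase _ _ (Finset.mem_univ j0),
          ← Finset.add_sum_erase _ _ hmemi0]
      have hcard : ((univ.erase j0).erase i0).card = n := by
        rw [Finset.card_erase_of_mem hmemi0, Finset.card_erase_of_mem (Finset.mem_univ j0),
          Finset.card_univ, Fintype.card_fin]
        omega
      have hrest : (n : ℝ) * ((v - u) / 2) ≤
          ∑ i ∈ (univ.erase j0).erase i0, largestGap (Function.update x i z) := by
        have := Finset.card_nsmul_le_sum _ _ _ hmax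
        rwa [hcard, nsmul_eq_mul] at this
      have hk1 := key1 i0 hij
      have hk2 := key2 j0 (Ne.symm hij)
      have hineq : ((n : ℝ) + 2) * (v - u) ≤ 2 * S := by
        rw [hsumsplit]; nlinarith [hk1, hk2, hrest]
      rw [hG, div_mul_eq_mul_div, le_div_iff₀ hn2]
      linarith
  · intro a b hab
    set z : ℝ := (a + b) / 2 with hz
    set x : Fin (n + 2) → ℝ := fun i => if i = 0 then a else b with hx
    have h01 : (0 : Fin (n + 2)) ≠ 1 := by
      simp [Fin.ext_iff]
    have hx0 : x 0 = a := by simp [hx]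
    have hx1 : x 1 = b := by simp [hx, Ne.symm h01]
    have hxval : ∀ m, x m = a ∨ x m = b := by
      intro m
      rcases eq_or_ne m 0 with rfl | h
      · left; simp [hx]
      · right; simp [hx, h]
    have hG : largestGap x = b - a := by
      apply le_antisymm
      · refine largestGap_le_of x (b - a) fun u v ⟨i, hi⟩ ⟨j, hj⟩ _ => ?_
        have hu : a ≤ u := by rcases hxval i with h | h <;> rw [h] at hi <;> linarith
        have hv : v ≤ b := by rcases hxval j with h | h <;> rw [h] at hj <;> linarith
        linarith
      · refine lb ⟨0, hx0.le⟩ ⟨1, hx1.ge⟩ fun i => ?_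
        rcases hxval i with h | h
        · left; rw [h]
        · right; rw [h]
    have haz : a ≤ z := by rw [hz]; linarith
    have hzb : z ≤ b := by rw [hz]; linarith
    have hEach : ∀ i, largestGap (Function.update x i z) = (b - a) / 2 := by
      intro i
      rcases eq_or_ne i 0 with rfl | hne
      · have hval0 : ∀ m, Function.update x (0 : Fin (n + 2)) z m = z ∨
            Function.update x (0 : Fin (n + 2)) z m = b := by
          intro m
          rcases eq_or_ne m 0 with rfl | hm
          · left; rw [Function.update_self]
          · right; rw [Function.update_of_ne hm]; simp [hx, hm]
        apply le_antisymm
        · refine largestGap_le_of _ _ fun u v ⟨i', hi'⟩ ⟨j', hj'⟩ _ => ?_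
          have hu : z ≤ u := by rcases hval0 i' with h | h <;> rw [h] at hi' <;> linarith
          have hv : v ≤ b := by rcases hval0 j' with h | h <;> rw [h] at hj' <;> linarith
          rw [hz] at hu
          linarith
        · have hlow : Function.update x (0 : Fin (n + 2)) z 0 ≤ z := by
            rw [Function.update_self]
          have hhigh : b ≤ Function.update x (0 : Fin (n + 2)) z 1 := by
            rw [Function.update_of_ne (Ne.symm h01), hx1]
          refine le_trans (show (b - a) / 2 ≤ b - z by rw [hz]; linarith)
            (lb ⟨0, hlow⟩ ⟨1, hhigh⟩ fun m => ?_)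
          rcases hval0 m with h | h
          · left; rw [h]
          · right; rw [h]
      · have hval : ∀ m, Function.update x i z m = z ∨ Function.update x i z m = a ∨
            Function.update x i z m = b := by
          intro m
          rcases eq_or_ne m i with rfl | hm
          · left; rw [Function.update_self]
          · rw [Function.update_of_ne hm]; right; exact hxval m
        apply le_antisymm
        · refine largestGap_le_of _ _ fun u v ⟨i', hi'⟩ ⟨j', hj'⟩ hs => ?_
          have hu : a ≤ u := by
            rcases hval i' with h | h | h <;> rw [h] at hi' <;> linarith
          have hv : v ≤ b := by
            rcases hval j' with h | h | h <;> rw [h] at hj' <;> linarith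
          have hzi : z ≤ u ∨ v ≤ z := by
            rcases hs i with h | h
            · left; rwa [Function.update_self] at h
            · right; rwa [Function.update_self] at h
          rw [hz] at hzi
          rcases hzi with h | h <;> linarith
        · have hlow : Function.update x i z 0 ≤ a := by
            rw [Function.update_of_ne (Ne.symm hne), hx0]
          have hhigh : z ≤ Function.update x i z i := by
            rw [Function.update_self]
          refine le_trans (show (b - a) / 2 ≤ z - a by rw [hz]; linarith)
            (lb ⟨0, hlow⟩ ⟨i, hhigh⟩ fun m => ?_)
          rcases eq_or_ne m i with rfl | hm
          · right; rw [Function.update_self]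
          · rw [Function.update_of_ne hm]
            rcases hxval m with h | h
            · left; rw [h]
            · right; rw [h]; exact hzb
    rw [hG]
    rw [Finset.sum_congr rfl fun i _ => hEach i, Finset.sum_const, Finset.card_univ,
      Fintype.card_fin, nsmul_eq_mul]
    push_cast
    field_simp
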